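/- For every integer n ≥ 0, Σ_{k=0}^n W(n,k)/(k+1) = B_n, where W(n,k) = (-1)^k·k!·S(n+1,k+1) are the signed Worpitzky numbers, S the Stirling numbers of the second kind, and B_n the Bernoulli numbers with B_1 = 1/2. -/

import Mathlib

open Finset Polynomial

/-- Stirling numbers of the second kind `S(n,k)`. -/
def stirling2 : ℕ → ℕ → ℕ
  | 0, 0 => 1
  | 0, _ + 1 => 0
  | _ + 1, 0 => 0
  | n + 1, k + 1 => (k + 1) * stirling2 n (k + 1) + stirling2 n k

lemma stirling2_eq_zero_of_lt : ∀ {n k : ℕ}, n < k → stirling2 n k = 0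
  | 0, _ + 1, _ => rfl
  | n + 1, k + 1, h => by
    have h2 : n < k := Nat.lt_of_succ_lt_succ h
    show (k + 1) * stirling2 n (k + 1) + stirling2 n k = 0
    rw [stirling2_eq_zero_of_lt (Nat.lt_succ_of_lt h2), stirling2_eq_zero_of_lt h2]
    simp

@[simp] lemma stirling2_succ_zero (n : ℕ) : stirling2 (n + 1) 0 = 0 := rfl

lemma stirling2_succ (n k : ℕ) :
    stirling2 (n + 1) (k + 1) = (k + 1) * stirling2 n (k + 1) + stirling2 n k := rfl

/-- `(x+1)^n = Σ_k S(n+1,k+1) · x^(falling k)` -/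
lemma stirling_ff (n : ℕ) (x : ℚ) :
    (x + 1) ^ n = ∑ k ∈ range (n + 1), (stirling2 (n + 1) (k + 1) : ℚ) *
      ∏ i ∈ range k, (x - i) := by
  induction n with
  | zero => simp [stirling2]
  | succ n ih =>
    have e1 : ∀ k : ℕ, (stirling2 (n + 2) (k + 1) : ℚ)
        = ((k : ℚ) + 1) * stirling2 (n + 1) (k + 1) + stirling2 (n + 1) k := by
      intro k
      rw [show n + 2 = (n + 1) + 1 from rfl, stirling2_succ]
      push_cast; ring
    have hsplit : ∑ k ∈ range (n + 2), (stirling2 (n + 2) (k + 1) : ℚ) * ∏ i ∈ range k, (x - i)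
        = (∑ k ∈ range (n + 2), ((k : ℚ) + 1) * (stirling2 (n + 1) (k + 1) : ℚ) *
            ∏ i ∈ range k, (x - i))
          + ∑ k ∈ range (n + 2), (stirling2 (n + 1) k : ℚ) * ∏ i ∈ range k, (x - i) := by
      rw [← sum_add_distrib]
      refine sum_congr rfl fun k _ => ?_
      rw [e1 k]; ring
    calc (x + 1) ^ (n + 1) = (x + 1) * (x + 1) ^ n := by ring
      _ = ∑ k ∈ range (n + 1), ((stirling2 (n + 1) (k + 1) : ℚ) * ∏ i ∈ range (k + 1), (x - i)
            + ((k : ℚ) + 1) * (stirling2 (n + 1) (k + 1) : ℚ) * ∏ i ∈ range k, (x - i)) := by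
          rw [ih, mul_sum]
          refine sum_congr rfl fun k _ => ?_
          rw [prod_range_succ]
          ring
      _ = (∑ k ∈ range (n + 1), (stirling2 (n + 1) (k + 1) : ℚ) * ∏ i ∈ range (k + 1), (x - i))
          + ∑ k ∈ range (n + 1), ((k : ℚ) + 1) * (stirling2 (n + 1) (k + 1) : ℚ) *
              ∏ i ∈ range k, (x - i) := sum_add_distrib
      _ = ∑ k ∈ range (n + 2), (stirling2 (n + 2) (k + 1) : ℚ) * ∏ i ∈ range k, (x - i) := by
          rw [hsplit,
            sum_range_succ (fun k => ((k : ℚ) + 1) * (stirling2 (n + 1) (k + 1) : ℚ) *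
              ∏ i ∈ range k, (x - i)) (n + 1),
            sum_range_succ' (fun k => (stirling2 (n + 1) k : ℚ) * ∏ i ∈ range k, (x - i)) (n + 1),
            stirling2_eq_zero_of_lt (Nat.lt_succ_self (n + 1))]
          simp only [stirling2_succ_zero, Nat.cast_zero, zero_mul, mul_zero, add_zero]
          ring

lemma prod_neg_range (k : ℕ) :
    ∏ i ∈ range k, (-((i : ℚ) + 1)) = (-1) ^ k * (Nat.factorial k : ℚ) := by
  induction k with
  | zero => simp
  | succ k ih =>
    rw [prod_range_succ, ih, Nat.factorial_succ]
    push_cast; ring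

/-- discrete Faulhaber with Stirling numbers -/
lemma sum_pow_stirling (n : ℕ) (m : ℕ) :
    ∑ j ∈ range m, ((j : ℚ) + 1) ^ n
      = ∑ k ∈ range (n + 1), (stirling2 (n + 1) (k + 1) : ℚ) *
          (∏ i ∈ range (k + 1), ((m : ℚ) - i)) / (k + 1) := by
  induction m with
  | zero =>
    rw [range_zero, sum_empty]
    symm
    refine sum_eq_zero fun k _ => ?_
    rw [prod_eq_zero (mem_range.mpr (Nat.succ_pos k)) (by simp)]
    simp
  | succ m ih =>
    rw [sum_range_succ, ih]
    have hdiff : ∀ k : ℕ, (∏ i ∈ range (k + 1), (((m : ℕ) + 1 : ℚ) - i))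
        = (∏ i ∈ range (k + 1), ((m : ℚ) - i)) + ((k : ℚ) + 1) * ∏ i ∈ range k, ((m : ℚ) - i) := by
      intro k
      have h1 : ∏ i ∈ range (k + 1), (((m : ℕ) + 1 : ℚ) - i)
          = (∏ i ∈ range k, ((m : ℚ) - i)) * ((m : ℚ) + 1) := by
        rw [prod_range_succ' (fun i => ((m : ℕ) + 1 : ℚ) - i)]
        congr 1
        · refine prod_congr rfl fun i _ => ?_
          push_cast; ring
        · push_cast; ring
      rw [h1, prod_range_succ]
      ring
    have hx := stirling_ff n (m : ℚ)
    push_cast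
    have hterm : ∀ k ∈ range (n + 1),
        ((stirling2 (n + 1) (k + 1) : ℚ) * ∏ i ∈ range (k + 1), ((m : ℚ) + 1 - i)) / ((k : ℚ) + 1)
        = ((stirling2 (n + 1) (k + 1) : ℚ) * ∏ i ∈ range (k + 1), ((m : ℚ) - i)) / ((k : ℚ) + 1)
          + (stirling2 (n + 1) (k + 1) : ℚ) * ∏ i ∈ range k, ((m : ℚ) - i) := by
      intro k _
      rw [hdiff k]
      have hk : ((k : ℚ) + 1) ≠ 0 := by positivity
      field_simp
    rw [sum_congr rfl hterm, sum_add_distrib, hx]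

lemma coeff_one_prod (k : ℕ) :
    (∏ i ∈ range (k + 1), (X - C (i : ℚ))).coeff 1 = (-1) ^ k * (Nat.factorial k : ℚ) := by
  rw [prod_range_succ' (fun i => X - C (i : ℚ))]
  simp only [Nat.cast_zero, map_zero, sub_zero]
  rw [coeff_mul_X, coeff_zero_eq_eval_zero, eval_prod]
  have h : ∀ i ∈ range k, eval 0 (X - C (((i + 1 : ℕ)) : ℚ)) = -((i : ℚ) + 1) := by
    intro i _
    simp only [eval_sub, eval_X, eval_C]
    push_cast; ring
  rw [prod_congr rfl h, prod_neg_range]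

/-- For every `n ≥ 0`, `Σ_{k=0}^n W(n,k)/(k+1) = B_n`, where
`W(n,k) = (-1)^k·k!·S(n+1,k+1)` are the signed Worpitzky numbers and `B_n` are the
Bernoulli numbers with `B_1 = 1/2` (i.e. `B_n = B_n(1)`). -/
theorem worpitzky_sum_eq_bernoulli (n : ℕ) :
    ∑ k ∈ Finset.range (n + 1),
        ((-1 : ℚ) ^ k * (Nat.factorial k : ℚ) * (stirling2 (n + 1) (k + 1) : ℚ)) / (k + 1) =
      (Polynomial.bernoulli n).eval 1 := by
  rw [Polynomial.bernoulli_eval_one]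
  set p1 : ℚ[X] := ∑ i ∈ range (n + 1),
      C (bernoulli' i * ((n + 1).choose i) / (n + 1)) * X ^ (n + 1 - i) with hp1
  set p2 : ℚ[X] := ∑ k ∈ range (n + 1),
      C ((stirling2 (n + 1) (k + 1) : ℚ) / (k + 1)) * ∏ i ∈ range (k + 1), (X - C (i : ℚ))
    with hp2
  have heval : ∀ m : ℕ, p1.eval (m : ℚ) = p2.eval (m : ℚ) := by
    intro m
    have hfaul : ∑ j ∈ range m, ((j : ℚ) + 1) ^ n
        = ∑ i ∈ range (n + 1),
            bernoulli' i * ((n + 1).choose i) * (m : ℚ) ^ (n + 1 - i) / (n + 1) := by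
      rw [← sum_Ico_pow m n, Finset.sum_Ico_eq_sum_range]
      simp only [Nat.add_sub_cancel]
      refine sum_congr rfl fun j _ => ?_
      push_cast; ring
    have h1 : p1.eval (m : ℚ) = ∑ i ∈ range (n + 1),
        bernoulli' i * ((n + 1).choose i) * (m : ℚ) ^ (n + 1 - i) / (n + 1) := by
      rw [hp1, eval_finset_sum]
      refine sum_congr rfl fun i _ => ?_
      simp only [eval_mul, eval_C, eval_pow, eval_X]
      ring
    have h2 : p2.eval (m : ℚ) = ∑ k ∈ range (n + 1),
        (stirling2 (n + 1) (k + 1) : ℚ) * (∏ i ∈ range (k + 1), ((m : ℚ) - i)) / (k + 1) := by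
      rw [hp2, eval_finset_sum]
      refine sum_congr rfl fun k _ => ?_
      simp only [eval_mul, eval_C, eval_prod, eval_sub, eval_X, eval_natCast]
      ring
    rw [h1, h2, ← hfaul, ← sum_pow_stirling]
  have hpq : p1 = p2 := by
    refine Polynomial.eq_of_infinite_eval_eq p1 p2 ?_
    apply Set.Infinite.mono (s := Set.range ((↑·) : ℕ → ℚ))
    · rintro _ ⟨m, rfl⟩
      exact heval m
    · exact Set.infinite_range_of_injective Nat.cast_injective
  have c1 : p1.coeff 1 = bernoulli' n := by
    rw [hp1, finset_sum_coeff]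
    rw [Finset.sum_eq_single n]
    · simp only [coeff_C_mul, coeff_X_pow, Nat.add_sub_cancel_left, if_pos rfl,
        Nat.choose_succ_self_right, mul_one]
      rw [Nat.cast_add, Nat.cast_one]
      field_simp
      simp
    · intro i hi hne
      have hi' := mem_range.mp hi
      simp only [coeff_C_mul, coeff_X_pow]
      rw [if_neg (by omega)]
      ring
    · intro h
      exact absurd (mem_range.mpr (Nat.lt_succ_self n)) h
  have c2 : p2.coeff 1 = ∑ k ∈ Finset.range (n + 1),
      ((-1 : ℚ) ^ k * (Nat.factorial k : ℚ) * (stirling2 (n + 1) (k + 1) : ℚ)) / (k + 1) := by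
    rw [hp2, finset_sum_coeff]
    refine sum_congr rfl fun k _ => ?_
    rw [coeff_C_mul, coeff_one_prod]
    ring
  rw [← c2, ← hpq, c1]
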